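/- Let $0 < \zeta < 1$, $a_1 > 0$, $b > 0$, and suppose $\gamma > 0$ satisfies $\gamma \le \frac{(1-\zeta)^2}{4 a_1 b}$. Let $(y_t)_{t\ge 0}$ be a sequence of nonnegative reals with $y_0 \le \frac{2\gamma b}{1-\zeta}$ and $y_{t+1} \le (\zeta + a_1 y_t) y_t + \gamma b$ for all $t$. Then $y_t \le \frac{2\gamma b}{1-\zeta}$ for all $t \ge 0$. -/
import Mathlib

/-- Boundedness of the momentum norm in Riemannian SGD with momentum:
if `y₀ ≤ 2γb/(1-ζ)` and `y_{t+1} ≤ (ζ + a₁ y_t) y_t + γ b` with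
`γ ≤ (1-ζ)²/(4a₁b)`, then `y_t ≤ 2γb/(1-ζ)` for all `t`. -/
theorem stmt_10 (ζ a₁ b γ : ℝ) (hζ0 : 0 < ζ) (hζ1 : ζ < 1)
    (ha₁ : 0 < a₁) (hb : 0 < b) (hγ : 0 < γ)
    (hγle : γ ≤ (1 - ζ) ^ 2 / (4 * a₁ * b))
    (y : ℕ → ℝ) (hy_nonneg : ∀ t, 0 ≤ y t)
    (hy0 : y 0 ≤ 2 * γ * b / (1 - ζ))
    (hrec : ∀ t, y (t + 1) ≤ (ζ + a₁ * y t) * y t + γ * b) :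
    ∀ t, y t ≤ 2 * γ * b / (1 - ζ) := by
  have h1ζ : 0 < 1 - ζ := by linarith
  have hγle' : γ * (4 * a₁ * b) ≤ (1 - ζ) ^ 2 := by
    rw [div_eq_mul_inv] at hγle
    have := (le_div_iff₀ (by positivity)).mp hγle
    linarith [this]
  intro t
  induction t with
  | zero => exact hy0
  | succ n ih =>
    have hB : y n * (1 - ζ) ≤ 2 * γ * b := by
      have h := (le_div_iff₀ h1ζ).mp ih
      linarith
    have hstep := hrec n
    rw [le_div_iff₀ h1ζ]
    have hyn := hy_nonneg n
    have ha : a₁ * y n ≤ (1 - ζ) / 2 := by nlinarith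
    nlinarith [mul_nonneg hyn h1ζ.le, mul_le_mul_of_nonneg_left hB (add_nonneg hζ0.le (mul_nonneg ha₁.le hyn))]
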